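/- Let G = G' ⊕ ⊕_{n<ω} G_n, where each G_n = ⊕_{α<λ_n} C_{k(n)} is a direct sum of λ_n > ℵ₀ copies of the cyclic group of order k(n), with k(n) = p_n^{t(n)} for primes p_n and t(n) ≥ 1, and the k(n) pairwise distinct. Then G does not admit a Polish group topology. -/

import Mathlib

open Filter Topology

section Aux

variable {G G' : Type} [AddGroup G] [AddGroup G'] {ι : ℕ → Type} {p t : ℕ → ℕ}

/-- The embedding of the direct sum part into `G`. -/
noncomputable def Sig (e : G ≃+ G' × (Π₀ n, (ι n →₀ ZMod (p n ^ t n)))) :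
    (Π₀ n, (ι n →₀ ZMod (p n ^ t n))) →+ G :=
  e.symm.toAddMonoidHom.comp ((0 : (Π₀ n, (ι n →₀ ZMod (p n ^ t n))) →+ G').prod
    (AddMonoidHom.id _))

lemma e_Sig (e : G ≃+ G' × (Π₀ n, (ι n →₀ ZMod (p n ^ t n))))
    (w : Π₀ n, (ι n →₀ ZMod (p n ^ t n))) : e (Sig e w) = (0, w) := by
  simp [Sig]

lemma xc_cast_ne_zero (hp : ∀ n, (p n).Prime) (ht : ∀ n, 1 ≤ t n) (n : ℕ) :
    ((p n ^ (t n - 1) : ℕ) : ZMod (p n ^ t n)) ≠ 0 := by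
  rw [Ne, ZMod.natCast_eq_zero_iff]
  intro hdvd
  have h1 := Nat.le_of_dvd (pow_pos (hp n).pos _) hdvd
  have h2 : p n ^ (t n - 1) < p n ^ t n :=
    Nat.pow_lt_pow_right (hp n).one_lt (by have := ht n; omega)
  exact lt_irrefl _ (h2.trans_le h1)

/-- Accumulation lemma: in every neighborhood of `0` there is an element of the `n`-th summand
not killed by `p n ^ (t n - 1)`. -/
lemma acc [TopologicalSpace G] [IsTopologicalAddGroup G] [TopologicalSpace.SeparableSpace G]
    (e : G ≃+ G' × (Π₀ n, (ι n →₀ ZMod (p n ^ t n))))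
    (hp : ∀ n, (p n).Prime) (ht : ∀ n, 1 ≤ t n) (hι : ∀ n, Uncountable (ι n))
    (n : ℕ) (U : Set G) (hU : IsOpen U) (hU0 : (0 : G) ∈ U) :
    ∃ f : ι n →₀ ZMod (p n ^ t n),
      Sig e (DFinsupp.single n f) ∈ U ∧ (p n ^ (t n - 1)) • f ≠ 0 := by
  by_contra hcon
  push_neg at hcon
  obtain ⟨D, hDc, hDd⟩ := TopologicalSpace.exists_countable_dense G
  -- a neighborhood `W` of 0 with `W - W ⊆ U`
  obtain ⟨W, hWo, hW0, hWsub⟩ :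
      ∃ W : Set G, IsOpen W ∧ (0 : G) ∈ W ∧ ∀ a ∈ W, ∀ b ∈ W, a - b ∈ U := by
    have hc : Continuous fun pr : G × G => pr.1 - pr.2 := continuous_sub
    have hmem : (fun pr : G × G => pr.1 - pr.2) ⁻¹' U ∈ 𝓝 ((0 : G), (0 : G)) := by
      apply hc.continuousAt.preimage_mem_nhds
      simpa using hU.mem_nhds hU0
    rw [nhds_prod_eq, Filter.mem_prod_iff] at hmem
    obtain ⟨s, hs, tt, htt, hst⟩ := hmem
    obtain ⟨s', hs's, hs'o, hs'0⟩ := mem_nhds_iff.mp hs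
    obtain ⟨t', ht't, ht'o, ht'0⟩ := mem_nhds_iff.mp htt
    refine ⟨s' ∩ t', hs'o.inter ht'o, ⟨hs'0, ht'0⟩, ?_⟩
    intro a ha b hb
    exact hst (Set.mk_mem_prod (hs's ha.1) (ht't hb.2))
  set R := Set.range (fun f : ι n →₀ ZMod (p n ^ t n) => (p n ^ (t n - 1)) • f) with hR
  have hch : ∀ r : R, ∃ f, (p n ^ (t n - 1)) • f = (r : ι n →₀ ZMod (p n ^ t n)) := fun r => r.2
  choose F hF using hch
  have hdd : ∀ r : R, ∃ d, d ∈ D ∧ -(Sig e (DFinsupp.single n (F r))) + d ∈ W := by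
    intro r
    have hop : IsOpen ((fun y => -(Sig e (DFinsupp.single n (F r))) + y) ⁻¹' W) :=
      hWo.preimage (continuous_const.add continuous_id)
    have hne : ((fun y => -(Sig e (DFinsupp.single n (F r))) + y) ⁻¹' W).Nonempty :=
      ⟨Sig e (DFinsupp.single n (F r)), by simpa using hW0⟩
    obtain ⟨d, hd1, hd2⟩ := hDd.inter_open_nonempty _ hop hne
    exact ⟨d, hd2, hd1⟩
  choose dd hddD hddW using hdd
  have hinj : Function.Injective dd := by
    intro r r' hEq
    set g1 := Sig e (DFinsupp.single n (F r)) with hg1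
    set g2 := Sig e (DFinsupp.single n (F r')) with hg2
    have h1 := hddW r
    have h2 := hddW r'
    rw [hEq] at h1
    have hsingle_sub : (DFinsupp.single n (F r' - F r) :
        Π₀ k, ι k →₀ ZMod (p k ^ t k)) =
        DFinsupp.single n (F r') - DFinsupp.single n (F r) := by
      have := map_sub (DFinsupp.singleAddHom (fun k => ι k →₀ ZMod (p k ^ t k)) n)
        (F r') (F r)
      simpa using this
    have hdiff : (-g1 + dd r') - (-g2 + dd r') = -g1 + g2 := by
      rw [sub_eq_add_neg, neg_add_rev, neg_neg, add_assoc, ← add_assoc (dd r'),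
        add_neg_cancel, zero_add]
    have hform : -g1 + g2 = Sig e (DFinsupp.single n (F r' - F r)) := by
      apply e.injective
      rw [map_add, map_neg, hg1, hg2, e_Sig, e_Sig, e_Sig]
      apply Prod.ext
      · simp
      · simp only [Prod.snd_add, Prod.snd_neg]
        rw [hsingle_sub]
        abel
    have hmemU : Sig e (DFinsupp.single n (F r' - F r)) ∈ U := by
      rw [← hform, ← hdiff]; exact hWsub _ h1 _ h2
    have := hcon _ hmemU
    rw [smul_sub, hF, hF, sub_eq_zero] at this
    exact Subtype.ext this.symm
  have hcountR : Countable R := by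
    haveI : Countable D := hDc.to_subtype
    exact Function.Injective.countable
      (f := fun r : R => (⟨dd r, hddD r⟩ : D))
      (fun r r' h => hinj (congrArg Subtype.val h))
  have hmap : ∀ a : ι n,
      Finsupp.single a ((p n ^ (t n - 1) : ℕ) : ZMod (p n ^ t n)) ∈ R := by
    intro a
    refine ⟨Finsupp.single a 1, ?_⟩
    show (p n ^ (t n - 1)) • Finsupp.single a (1 : ZMod (p n ^ t n)) = _
    rw [← Nat.cast_smul_eq_nsmul (ZMod (p n ^ t n)), Finsupp.smul_single, smul_eq_mul,
      mul_one]
  have hinj2 : Function.Injective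
      (fun a : ι n => (⟨Finsupp.single a ((p n ^ (t n - 1) : ℕ) : ZMod (p n ^ t n)),
        hmap a⟩ : R)) := by
    intro a b h
    have h' := congrArg Subtype.val h
    exact Finsupp.single_left_injective (xc_cast_ne_zero hp ht n) h'
  haveI := hι n
  exact not_countable (hinj2.countable)

end Aux

theorem stmt_7 {G G' : Type} [AddGroup G] [AddGroup G']
    (p t : ℕ → ℕ) (hp : ∀ n, (p n).Prime) (ht : ∀ n, 1 ≤ t n)
    (hdist : Function.Injective (fun n => p n ^ t n))
    (ι : ℕ → Type) (hι : ∀ n, Uncountable (ι n))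
    (e : G ≃+ G' × (Π₀ n, (ι n →₀ ZMod (p n ^ t n)))) :
    ¬ ∃ τ : TopologicalSpace G, @IsTopologicalAddGroup G τ _ ∧ @PolishSpace G τ := by
  rintro ⟨τ, hTG, hPol⟩
  letI := τ
  haveI := hTG
  haveI := hPol
  letI := TopologicalSpace.upgradeIsCompletelyMetrizable G
  classical
  -- Coefficients solving `p j ^ t j * c ≡ p i ^ (t i - 1) [ZMod (p i ^ t i)]`
  have hcoef : ∀ j i : ℕ, (p j ≠ p i ∨ t j < t i) →
      ∃ cc : ℕ, cc < p i ^ t i ∧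
        ((p j ^ t j * cc : ℕ) : ZMod (p i ^ t i)) =
          ((p i ^ (t i - 1) : ℕ) : ZMod (p i ^ t i)) := by
    intro j i hgood
    haveI : NeZero (p i ^ t i) := ⟨(pow_pos (hp i).pos _).ne'⟩
    by_cases hpe : p j = p i
    · have hlt : t j < t i := by
        rcases hgood with h | h
        · exact absurd hpe h
        · exact h
      refine ⟨p i ^ (t i - 1 - t j), Nat.pow_lt_pow_right (hp i).one_lt (by
        have := ht i; omega), ?_⟩
      congr 1
      rw [hpe, ← pow_add]
      congr 1
      omega
    · have hcop : Nat.Coprime (p j ^ t j) (p i ^ t i) :=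
        Nat.coprime_pow_primes _ _ (hp j) (hp i) hpe
      set uu := ZMod.unitOfCoprime _ hcop with huu
      set z : ZMod (p i ^ t i) :=
        ((uu⁻¹ : (ZMod (p i ^ t i))ˣ) : ZMod (p i ^ t i)) *
          ((p i ^ (t i - 1) : ℕ) : ZMod (p i ^ t i)) with hz
      refine ⟨z.val, ZMod.val_lt z, ?_⟩
      rw [Nat.cast_mul, ZMod.natCast_val, ZMod.cast_id]
      rw [hz, ← ZMod.coe_unitOfCoprime _ hcop, ← huu, ← mul_assoc]
      rw [Units.mul_inv, one_mul]
  obtain ⟨c, hclt, hcspec⟩ : ∃ c : ℕ → ℕ → ℕ, (∀ j i, c j i < p i ^ t i) ∧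
      (∀ j i, (p j ≠ p i ∨ t j < t i) →
        ((p j ^ t j * c j i : ℕ) : ZMod (p i ^ t i)) =
          ((p i ^ (t i - 1) : ℕ) : ZMod (p i ^ t i))) := by
    refine ⟨fun j i => if h : (p j ≠ p i ∨ t j < t i) then (hcoef j i h).choose else 0,
      ?_, ?_⟩
    · intro j i; dsimp only; split
      · exact (hcoef j i ‹_›).choose_spec.1
      · exact pow_pos (hp i).pos _
    · intro j i h; dsimp only; rw [dif_pos h]; exact (hcoef j i h).choose_spec.2
  -- smul moves through the summand embedding
  have hsig_smul : ∀ (i k : ℕ) (f : ι i →₀ ZMod (p i ^ t i)),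
      k • Sig e (DFinsupp.single i f) = Sig e (DFinsupp.single i (k • f)) := by
    intro i k f
    rw [← map_nsmul]
    congr 1
    have := (DFinsupp.singleAddHom (fun m => ι m →₀ ZMod (p m ^ t m)) i).map_nsmul k f
    simpa using this.symm
  -- existence of small elements good w.r.t. a finite set of base points
  have hex : ∀ (n : ℕ) (Y : Finset G), ∃ f : ι n →₀ ZMod (p n ^ t n),
      (p n ^ (t n - 1)) • f ≠ 0 ∧
      ∀ y ∈ Y, ∀ cc, cc < p n ^ t n →
        dist y (y + cc • Sig e (DFinsupp.single n f)) < (1 / 2 : ℝ) ^ n := by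
    intro n Y
    set U : Set G := ⋂ y ∈ Y, ⋂ cc ∈ Finset.range (p n ^ t n),
      {x : G | dist y (y + cc • x) < (1 / 2 : ℝ) ^ n} with hUdef
    have hUopen : IsOpen U := by
      apply isOpen_biInter_finset
      intro y _
      apply isOpen_biInter_finset
      intro cc _
      have hcont : Continuous fun x : G => dist y (y + cc • x) :=
        continuous_const.dist (continuous_const.add (continuous_nsmul cc))
      exact isOpen_Iio.preimage hcont
    have hU0 : (0 : G) ∈ U := by
      simp only [hUdef, Set.mem_iInter, Set.mem_setOf_eq]
      intro y _ cc _
      rw [smul_zero, add_zero, dist_self]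
      positivity
    obtain ⟨f, hfU, hfne⟩ := acc e hp ht hι n U hUopen hU0
    refine ⟨f, hfne, ?_⟩
    intro y hy cc hcc
    simp only [hUdef, Set.mem_iInter, Set.mem_setOf_eq] at hfU
    exact hfU y hy cc (Finset.mem_range.mpr hcc)
  -- base point collections
  obtain ⟨Yb, hY1, hY2⟩ :
      ∃ Yb : ℕ → (∀ i : ℕ, ι i →₀ ZMod (p i ^ t i)) → Finset G,
        (∀ n B, Sig e (∑ i ∈ Finset.range n,
          DFinsupp.single i ((p i ^ (t i - 1)) • B i)) ∈ Yb n B) ∧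
        (∀ n B j N, j ≤ n → N ≤ n →
          Sig e (∑ i ∈ Finset.Ioo N n,
            DFinsupp.single i ((c j i) • B i)) ∈ Yb n B) := by
    refine ⟨fun n B =>
      insert (Sig e (∑ i ∈ Finset.range n, DFinsupp.single i ((p i ^ (t i - 1)) • B i)))
        ((Finset.range (n + 1) ×ˢ Finset.range (n + 1)).image
          (fun jN : ℕ × ℕ =>
            Sig e (∑ i ∈ Finset.Ioo jN.2 n, DFinsupp.single i ((c jN.1 i) • B i)))),
      ?_, ?_⟩
    · intro n B; exact Finset.mem_insert_self _ _
    · intro n B j N hj hN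
      refine Finset.mem_insert_of_mem (Finset.mem_image.mpr ⟨(j, N), ?_, rfl⟩)
      simp [Finset.mem_product, Nat.lt_succ_iff, hj, hN]
  -- the recursive construction
  have hstep : ∀ (n : ℕ) (B : ∀ i : ℕ, ι i →₀ ZMod (p i ^ t i)),
      ∃ f : ι n →₀ ZMod (p n ^ t n), (p n ^ (t n - 1)) • f ≠ 0 ∧
        ∀ y ∈ Yb n B, ∀ cc, cc < p n ^ t n →
          dist y (y + cc • Sig e (DFinsupp.single n f)) < (1 / 2 : ℝ) ^ n :=
    fun n B => hex n (Yb n B)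
  choose Fc hFc1 hFc2 using hstep
  let seq : ℕ → ∀ i : ℕ, ι i →₀ ZMod (p i ^ t i) := fun n =>
    Nat.rec (fun _ => 0) (fun k ih => Function.update ih k (Fc k ih)) n
  have hseq : ∀ k, seq (k + 1) = Function.update (seq k) k (Fc k (seq k)) := fun k => rfl
  let bF : ∀ i : ℕ, ι i →₀ ZMod (p i ^ t i) := fun i => seq (i + 1) i
  have hbF : ∀ i, bF i = Fc i (seq i) := by
    intro i
    show seq (i + 1) i = _
    rw [hseq, Function.update_self]
  have hcoh : ∀ m i, i < m → seq m i = bF i := by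
    intro m
    induction m with
    | zero => intro i hi; omega
    | succ k ih =>
      intro i hi
      rw [hseq]
      rcases Nat.lt_succ_iff_lt_or_eq.mp hi with h | h
      · rw [Function.update_of_ne (by omega)]
        exact ih i h
      · subst h
        rw [Function.update_self]
        exact (hbF i).symm
  -- transferred distance estimates
  have hsum_main : ∀ n, (∑ i ∈ Finset.range n, DFinsupp.single i ((p i ^ (t i - 1)) • (seq n) i))
      = (∑ i ∈ Finset.range n, DFinsupp.single i ((p i ^ (t i - 1)) • bF i)) := by
    intro n
    refine Finset.sum_congr rfl fun i hi => ?_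
    rw [hcoh n i (Finset.mem_range.mp hi)]
  have hsum_P : ∀ n j N, (∑ i ∈ Finset.Ioo N n, DFinsupp.single i ((c j i) • (seq n) i))
      = (∑ i ∈ Finset.Ioo N n, DFinsupp.single i ((c j i) • bF i)) := by
    intro n j N
    refine Finset.sum_congr rfl fun i hi => ?_
    rw [hcoh n i (Finset.mem_Ioo.mp hi).2]
  have hmain : ∀ n cc, cc < p n ^ t n →
      dist (Sig e (∑ i ∈ Finset.range n, DFinsupp.single i ((p i ^ (t i - 1)) • bF i)))
        (Sig e (∑ i ∈ Finset.range n, DFinsupp.single i ((p i ^ (t i - 1)) • bF i))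
          + cc • Sig e (DFinsupp.single n (bF n))) < (1 / 2 : ℝ) ^ n := by
    intro n cc hcc
    have h := hFc2 n (seq n) _ (hY1 n (seq n)) cc hcc
    rw [hsum_main n] at h
    rw [hbF n]
    exact h
  have hPd : ∀ n j N, j ≤ n → N ≤ n → ∀ cc, cc < p n ^ t n →
      dist (Sig e (∑ i ∈ Finset.Ioo N n, DFinsupp.single i ((c j i) • bF i)))
        (Sig e (∑ i ∈ Finset.Ioo N n, DFinsupp.single i ((c j i) • bF i))
          + cc • Sig e (DFinsupp.single n (bF n))) < (1 / 2 : ℝ) ^ n := by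
    intro n j N hj hN cc hcc
    have h := hFc2 n (seq n) _ (hY2 n (seq n) j N hj hN) cc hcc
    rw [hsum_P n j N] at h
    rw [hbF n]
    exact h
  -- the main series
  set sB : ℕ → G := fun M =>
    Sig e (∑ i ∈ Finset.range M, DFinsupp.single i ((p i ^ (t i - 1)) • bF i)) with hsB
  have hsBstep : ∀ M, sB (M + 1) = sB M
      + (p M ^ (t M - 1)) • Sig e (DFinsupp.single M (bF M)) := by
    intro M
    simp only [hsB]
    rw [Finset.sum_range_succ, map_add, ← hsig_smul]
  have hCauchy : CauchySeq sB := by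
    refine cauchySeq_of_dist_le_of_summable (fun M => (1 / 2 : ℝ) ^ M) ?_
      summable_geometric_two
    intro M
    rw [hsBstep M]
    exact (hmain M (p M ^ (t M - 1))
      (Nat.pow_lt_pow_right (hp M).one_lt (by have := ht M; omega))).le
  obtain ⟨u, hu⟩ := cauchySeq_tendsto_of_complete hCauchy
  -- choose a coordinate outside the support of u
  obtain ⟨j, hj⟩ : ∃ j : ℕ, (e u).2 j = 0 := by
    obtain ⟨j, hj⟩ := ((DFinsupp.finite_support ((e u).2)).infinite_compl).nonempty
    exact ⟨j, by simpa using hj⟩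
  -- choose N beyond all "bad" indices
  have hbadfin : ({i : ℕ | p j = p i ∧ t i ≤ t j}).Finite := by
    have himfin : (t '' {i : ℕ | p j = p i ∧ t i ≤ t j}).Finite :=
      (Set.finite_Iic (t j)).subset (by rintro x ⟨i, ⟨_, h2⟩, rfl⟩; exact h2)
    refine Set.Finite.of_finite_image himfin ?_
    rintro i1 ⟨hp1, ht1⟩ i2 ⟨hp2, ht2⟩ hteq
    apply hdist
    show p i1 ^ t i1 = p i2 ^ t i2
    rw [← hp1, ← hp2, hteq]
  set N := max j (hbadfin.toFinset.sup id) with hN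
  have hjN : j ≤ N := le_max_left _ _
  have hgood : ∀ i, N < i → (p j ≠ p i ∨ t j < t i) := by
    intro i hi
    by_contra hcon
    push_neg at hcon
    obtain ⟨h1, h2⟩ := hcon
    have hmem : i ∈ hbadfin.toFinset := by
      rw [Set.Finite.mem_toFinset]; exact ⟨h1, h2⟩
    have h3 : i ≤ hbadfin.toFinset.sup id := Finset.le_sup (f := id) hmem
    have h4 : hbadfin.toFinset.sup id ≤ N := le_max_right _ _
    omega
  -- the auxiliary divisible series
  set pB : ℕ → G := fun M =>
    Sig e (∑ i ∈ Finset.Ioc N M, DFinsupp.single i ((c j i) • bF i)) with hpB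
  have hpBstep : ∀ M, N ≤ M → pB (M + 1) = pB M
      + (c j (M + 1)) • Sig e (DFinsupp.single (M + 1) (bF (M + 1))) := by
    intro M hM
    simp only [hpB]
    rw [Finset.sum_Ioc_succ_top hM, map_add, ← hsig_smul]
  have hIooIoc : ∀ M : ℕ, Finset.Ioo N (M + 1) = Finset.Ioc N M := by
    intro M; ext x; simp [Finset.mem_Ioo, Finset.mem_Ioc, Nat.lt_succ_iff]
  have hpCauchy : CauchySeq pB := by
    refine cauchySeq_of_dist_le_of_summable (fun M => (1 / 2 : ℝ) ^ M) ?_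
      summable_geometric_two
    intro M
    rcases lt_or_ge M N with h | h
    · have h1 : Finset.Ioc N M = ∅ := Finset.Ioc_eq_empty (by omega)
      have h2 : Finset.Ioc N (M + 1) = ∅ := Finset.Ioc_eq_empty (by omega)
      simp only [hpB, h1, h2, Finset.sum_empty, dist_self]
      positivity
    · rw [hpBstep M h]
      have hd := hPd (M + 1) j N (by omega) (by omega) (c j (M + 1)) (hclt j (M + 1))
      rw [hIooIoc M] at hd
      exact hd.le.trans (pow_le_pow_of_le_one (by norm_num) (by norm_num) (Nat.le_succ M))
  obtain ⟨L, hL⟩ := cauchySeq_tendsto_of_complete hpCauchy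
  -- the key algebraic identity for partial sums
  have hkey : ∀ M, N ≤ M → sB (M + 1) = sB (N + 1) + (p j ^ t j) • pB M := by
    intro M hM
    have hLHS : (p j ^ t j) • pB M =
        Sig e (∑ i ∈ Finset.Ioc N M, DFinsupp.single i ((p i ^ (t i - 1)) • bF i)) := by
      simp only [hpB]
      rw [← map_nsmul]
      congr 1
      rw [Finset.smul_sum]
      refine Finset.sum_congr rfl fun i hi => ?_
      have higood : p j ≠ p i ∨ t j < t i := hgood i (Finset.mem_Ioc.mp hi).1
      have e1 : (p j ^ t j) • (DFinsupp.single i ((c j i) • bF i) :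
          Π₀ m, ι m →₀ ZMod (p m ^ t m)) =
          DFinsupp.single i ((p j ^ t j) • ((c j i) • bF i)) := by
        have := (DFinsupp.singleAddHom (fun m => ι m →₀ ZMod (p m ^ t m)) i).map_nsmul
          (p j ^ t j) ((c j i) • bF i)
        simpa using this.symm
      have e2 : (p j ^ t j) • ((c j i) • bF i) = ((p j ^ t j) * (c j i)) • bF i :=
        (mul_smul _ _ _).symm
      have e3 : ((p j ^ t j) * (c j i)) • bF i = (p i ^ (t i - 1)) • bF i := by
        rw [← Nat.cast_smul_eq_nsmul (ZMod (p i ^ t i)),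
          ← Nat.cast_smul_eq_nsmul (ZMod (p i ^ t i)) (p i ^ (t i - 1)),
          hcspec j i higood]
      rw [e1, e2, e3]
    have hsplit : (Finset.range (M + 1) : Finset ℕ) = Finset.range (N + 1) ∪ Finset.Ioc N M := by
      ext x; simp only [Finset.mem_range, Finset.mem_union, Finset.mem_Ioc]; omega
    have hdisj : Disjoint (Finset.range (N + 1)) (Finset.Ioc N M) := by
      rw [Finset.disjoint_left]
      intro x hx hx'
      rw [Finset.mem_range] at hx
      rw [Finset.mem_Ioc] at hx'
      omega
    have hRHS : sB (M + 1) = sB (N + 1) +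
        Sig e (∑ i ∈ Finset.Ioc N M, DFinsupp.single i ((p i ^ (t i - 1)) • bF i)) := by
      simp only [hsB]
      rw [← map_add]
      congr 1
      rw [hsplit, Finset.sum_union hdisj]
    rw [hRHS, hLHS]
  -- pass to the limit
  have h1 : Filter.Tendsto (fun M => (p j ^ t j) • pB M) Filter.atTop
      (𝓝 ((p j ^ t j) • L)) := by
    have hcont : Continuous fun x : G => (p j ^ t j) • x := continuous_nsmul _
    exact (hcont.tendsto L).comp hL
  have h2 : Filter.Tendsto (fun M => sB (N + 1) + (p j ^ t j) • pB M) Filter.atTop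
      (𝓝 (sB (N + 1) + (p j ^ t j) • L)) :=
    tendsto_const_nhds.add h1
  have h3 : Filter.Tendsto (fun M => sB (M + 1)) Filter.atTop (𝓝 u) :=
    hu.comp (Filter.tendsto_add_atTop_nat 1)
  have heq : u = sB (N + 1) + (p j ^ t j) • L := by
    refine tendsto_nhds_unique (h3.congr' ?_) h2
    exact Filter.eventually_atTop.mpr ⟨N, fun M hM => hkey M hM⟩
  -- evaluate the j-th coordinate
  set φ : G →+ (ι j →₀ ZMod (p j ^ t j)) :=
    (DFinsupp.evalAddMonoidHom j).comp
      ((AddMonoidHom.snd G' _).comp e.toAddMonoidHom) with hφ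
  have hφval : ∀ x : G, φ x = (e x).2 j := fun x => rfl
  have hφSig : ∀ w, φ (Sig e w) = w j := by
    intro w
    rw [hφval, e_Sig]
  have hφu : φ u = 0 := by rw [hφval, hj]
  have hφs : φ (sB (N + 1)) = (p j ^ (t j - 1)) • bF j := by
    simp only [hsB]
    rw [hφSig, DFinsupp.finset_sum_apply]
    rw [Finset.sum_eq_single_of_mem j (Finset.mem_range.mpr (by omega))]
    · rw [DFinsupp.single_eq_same]
    · intro i _ hne
      exact DFinsupp.single_eq_of_ne hne.symm
  have hφL : φ ((p j ^ t j) • L) = 0 := by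
    rw [map_nsmul, ← Nat.cast_smul_eq_nsmul (ZMod (p j ^ t j))]
    simp [ZMod.natCast_self]
  have hzero : (p j ^ (t j - 1)) • bF j = 0 := by
    have hfinal := congrArg φ heq
    rw [map_add, hφL, hφu, hφs, add_zero] at hfinal
    exact hfinal.symm
  have hne := hFc1 j (seq j)
  rw [← hbF j] at hne
  exact hne hzero
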